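/- Let p = 4, λ = √2, U = [[√2,−1],[1,0]], T = [[0,−1],[1,0]]. Define q(z) = (z − (√2+√14)/2)^{−1} + (z − (−√2+√14)/2)^{−1} − (z − (√2−√14)/6)^{−1} − (z − (−√2−√14)/6)^{−1}. Then q satisfies the two rational period function relations of weight 2 (k = 1) for the Hecke group G_4: q(z) + z^{−2} q(−1/z) = 0 and q + q|U + q|U² + q|U³ = 0, at every z ∈ ℂ where all terms are defined. That is, q is a rational period function of weight 2 on G_4. -/

import Mathlib

open Matrix

noncomputable section

abbrev SL2R := Matrix.SpecialLinearGroup (Fin 2) ℝ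

/-- `S = [[1,√2],[0,1]]`, the translation generator of `G₄`. -/
def Smat : SL2R := ⟨!![1, Real.sqrt 2; 0, 1], by norm_num [Matrix.det_fin_two_of]⟩

/-- `T = [[0,-1],[1,0]]`. -/
def Tmat : SL2R := ⟨!![0, -1; 1, 0], by norm_num [Matrix.det_fin_two_of]⟩

/-- `U = S * T = [[√2,-1],[1,0]]`. -/
def Umat : SL2R := Smat * Tmat

/-- Möbius action of a matrix on ℂ. -/
def mobius (M : SL2R) (z : ℂ) : ℂ :=
  ((M.1 0 0 : ℝ) * z + (M.1 0 1 : ℝ)) / ((M.1 1 0 : ℝ) * z + (M.1 1 1 : ℝ))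

/-- The automorphy denominator `cz + d`. -/
def denom (M : SL2R) (z : ℂ) : ℂ := (M.1 1 0 : ℝ) * z + (M.1 1 1 : ℝ)

/-- Weight `2k` slash operator: `(f|M)(z) = (cz+d)^{-2k} f(Mz)`. -/
def slash (k : ℕ) (M : SL2R) (f : ℂ → ℂ) (z : ℂ) : ℂ :=
  (denom M z) ^ (-(2 * (k : ℤ))) * f (mobius M z)

/-- `√2` as a complex number. -/
def sq2 : ℂ := (Real.sqrt 2 : ℝ)

/-- All four quadratics of the example are nonvanishing at `w`. -/
def QuadsNonzero (w : ℂ) : Prop :=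
  w ^ 2 - sq2 * w - 3 ≠ 0 ∧ w ^ 2 + sq2 * w - 3 ≠ 0 ∧
  3 * w ^ 2 - sq2 * w - 1 ≠ 0 ∧ 3 * w ^ 2 + sq2 * w - 1 ≠ 0

/-- `√14` as a complex number. -/
def sq14 : ℂ := (Real.sqrt 14 : ℝ)

/-- `w` avoids the four (simple) poles of the weight-2 example. -/
def AwayFromPoles (w : ℂ) : Prop :=
  w ≠ (sq2 + sq14) / 2 ∧ w ≠ (-sq2 + sq14) / 2 ∧
  w ≠ (sq2 - sq14) / 6 ∧ w ≠ (-sq2 - sq14) / 6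

-- auxiliary lemmas

lemma hs2 : sq2^2 = 2 := by
  rw [sq2]; norm_cast; exact Real.sq_sqrt (by norm_num)

lemma hs14 : sq14^2 = 14 := by
  rw [sq14]; norm_cast; exact Real.sq_sqrt (by norm_num)

lemma hs28 : (sq2*sq14)^2 = 28 := by
  linear_combination sq14^2*hs2 + 2*hs14

lemma lin_ne (u v : ℂ) (h : u^2*2 ≠ v^2*14) : u*sq2 + v*sq14 ≠ 0 := by
  intro h0; apply h
  linear_combination (u*sq2 - v*sq14)*h0 - u^2*hs2 + v^2*hs14

lemma lin_ne' (u v w : ℂ) (hw : w ≠ 0) (h : u^2*2 ≠ v^2*14) : (u*sq2 + v*sq14)/w ≠ 0 :=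
  div_ne_zero (lin_ne u v h) hw

lemma st_ne (x w : ℂ) (hw : w ≠ 0) (h : x^2 ≠ 28) : (x + sq2*sq14)/w ≠ 0 := by
  apply div_ne_zero _ hw
  intro h0; apply h
  linear_combination (x - sq2*sq14)*h0 + hs28

lemma Umat_coe : Umat.1 = !![Real.sqrt 2, -1; 1, 0] := by
  show (Smat.1 * Tmat.1) = _
  simp [Smat, Tmat]

lemma Umat2_coe : (Umat : Matrix (Fin 2) (Fin 2) ℝ)^2 = !![1, -Real.sqrt 2; Real.sqrt 2, -1] := by
  rw [pow_two]
  show Umat.1 * Umat.1 = _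
  rw [Umat_coe]
  ext i j
  fin_cases i <;> fin_cases j <;>
    simp [Matrix.mul_apply, Fin.sum_univ_succ] <;>
    nlinarith [Real.sq_sqrt (by norm_num : (2:ℝ) ≥ 0), Real.sqrt_nonneg 2]

lemma Umat3_coe : (Umat : Matrix (Fin 2) (Fin 2) ℝ)^3 = !![0, -1; 1, -Real.sqrt 2] := by
  rw [pow_succ, Umat2_coe]
  show _ * Umat.1 = _
  rw [Umat_coe]
  ext i j
  fin_cases i <;> fin_cases j <;>
    simp [Matrix.mul_apply, Fin.sum_univ_succ] <;>
    nlinarith [Real.sq_sqrt (by norm_num : (2:ℝ) ≥ 0), Real.sqrt_nonneg 2]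

lemma dE1 (z : ℂ) : denom Umat z = 1*z + 0 := by simp [denom, Umat_coe]
lemma mE1 (z : ℂ) : mobius Umat z = (sq2*z + -1)/(1*z + 0) := by simp [mobius, Umat_coe, sq2]
lemma dE2 (z : ℂ) : denom (Umat^2) z = sq2*z + -1 := by simp [denom, Umat2_coe, sq2]
lemma mE2 (z : ℂ) : mobius (Umat^2) z = (1*z + -sq2)/(sq2*z + -1) := by simp [mobius, Umat2_coe, sq2]
lemma dE3 (z : ℂ) : denom (Umat^3) z = 1*z + -sq2 := by simp [denom, Umat3_coe, sq2]
lemma mE3 (z : ℂ) : mobius (Umat^3) z = (0*z + -1)/(1*z + -sq2) := by simp [mobius, Umat3_coe, sq2]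
lemma mE0 (z : ℂ) : mobius (Umat^0) z = z := by
  simp [mobius, pow_zero, Matrix.SpecialLinearGroup.coe_one, Matrix.one_apply]

lemma pairT (z a : ℂ) (hz : z ≠ 0) (ha : a ≠ 0) (h1 : z - a ≠ 0) (g1 : -1/z - a ≠ 0) :
    (z-a)⁻¹ - (z + a⁻¹)⁻¹ + z^(-2:ℤ)*((-1/z - a)⁻¹ - (-1/z + a⁻¹)⁻¹) = 0 := by
  have k1 : a*z + 1 ≠ 0 := by
    intro h; apply g1; field_simp; linear_combination -h
  have m1 : (z + a⁻¹)⁻¹ = a*(a*z+1)⁻¹ := by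
    rw [show z + a⁻¹ = (a*z+1)/a by field_simp, inv_div]; ring
  have m2 : (-1/z - a)⁻¹ = -z*(a*z+1)⁻¹ := by
    rw [show -1/z - a = -((a*z+1)/z) by field_simp; ring, inv_neg, inv_div]; ring
  have m3 : (-1/z + a⁻¹)⁻¹ = a*z*(z-a)⁻¹ := by
    rw [show -1/z + a⁻¹ = (z-a)/(a*z) by field_simp; ring, inv_div]; ring
  rw [show (z:ℂ)^(-2:ℤ) = z⁻¹*z⁻¹ by rw [_root_.zpow_neg, zpow_two, mul_inv], m1, m2, m3]
  have c1 : (z-a)⁻¹ * (z-a) = 1 := inv_mul_cancel₀ h1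
  have c2 : (a*z+1)⁻¹ * (a*z+1) = 1 := inv_mul_cancel₀ k1
  have c3 : z⁻¹ * z = 1 := inv_mul_cancel₀ hz
  linear_combination (z*z⁻¹*z⁻¹) * c1 - (z*z⁻¹*z⁻¹) * c2 + ((a*(a*z+1)⁻¹ - (z-a)⁻¹)*(z⁻¹*z+1)) * c3

lemma slash_term (a b c d p e p' z : ℂ) (hdet : a*d - b*c = 1) (he : e ≠ 0)
    (hea : e = a - c*p) (hp' : e*p' = d*p - b) (hden : c*z+d ≠ 0)
    (hne : (a*z+b)/(c*z+d) - p ≠ 0) :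
    (c*z+d)⁻¹*(c*z+d)⁻¹ * ((a*z+b)/(c*z+d) - p)⁻¹ = (z-p')⁻¹ - c*(c*z+d)⁻¹ := by
  have key : (a*z+b)/(c*z+d) - p = e*(z-p')/(c*z+d) := by
    rw [eq_div_iff hden, sub_mul, div_mul_cancel₀ _ hden]
    linear_combination (-z)*hea + hp'
  have hz : z - p' ≠ 0 := by
    intro h0; apply hne; rw [key, h0, mul_zero, zero_div]
  rw [key, inv_div, div_eq_mul_inv, mul_inv]
  have c1 : (c*z+d)⁻¹ * (c*z+d) = 1 := inv_mul_cancel₀ hden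
  have c2 : (z-p')⁻¹ * (z-p') = 1 := inv_mul_cancel₀ hz
  have c3 : e⁻¹ * e = 1 := inv_mul_cancel₀ he
  linear_combination (-((c*z+d)⁻¹*(z-p')⁻¹*e⁻¹))*hdet + (-((c*z+d)⁻¹*(z-p')⁻¹*e⁻¹*d))*hea +
    (-((c*z+d)⁻¹*(z-p')⁻¹*e⁻¹*c))*hp' + ((c*z+d)⁻¹*(z-p')⁻¹*(d+c*p'))*c3 +
    ((z-p')⁻¹ + (c*z+d)⁻¹*(z-p')⁻¹*e⁻¹)*c1 + (-(c*(c*z+d)⁻¹))*c2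


set_option maxHeartbeats  2000000 in
/-- The function
`q(z) = (z-(√2+√14)/2)⁻¹ + (z-(-√2+√14)/2)⁻¹ - (z-(√2-√14)/6)⁻¹ - (z-(-√2-√14)/6)⁻¹`
satisfies the two rational period function relations of weight `2` on `G₄`:
`q(z) + z⁻² q(-1/z) = 0` and `q + q|U + q|U² + q|U³ = 0`. -/
theorem rpf_example_weight2 (q : ℂ → ℂ)
    (hq : ∀ z, q z = (z - (sq2 + sq14) / 2)⁻¹ + (z - (-sq2 + sq14) / 2)⁻¹
        - (z - (sq2 - sq14) / 6)⁻¹ - (z - (-sq2 - sq14) / 6)⁻¹) :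
    (∀ z : ℂ, z ≠ 0 → AwayFromPoles z → AwayFromPoles (-1 / z) →
      q z + z ^ (-2 : ℤ) * q (-1 / z) = 0) ∧
    (∀ z : ℂ,
      (∀ t < 4, denom (Umat ^ t) z ≠ 0 ∧ AwayFromPoles (mobius (Umat ^ t) z)) →
      q z + slash 1 Umat q z + slash 1 (Umat ^ 2) q z + slash 1 (Umat ^ 3) q z = 0) := by
  constructor
  · -- Part 1: the T relation
    rintro z hz ⟨hA, hB, hC, hD⟩ ⟨gA, gB, gC, gD⟩
    rw [hq z, hq (-1/z)]
    have ha1 : (sq2 + sq14)/2 ≠ 0 := by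
      have := lin_ne' 1 1 2 (by norm_num) (by norm_num); simpa using this
    have ha2 : (-sq2 + sq14)/2 ≠ 0 := by
      have := lin_ne' (-1) 1 2 (by norm_num) (by norm_num)
      intro h; apply this; rw [← h]; ring
    have hγ : (sq2 - sq14)/6 = -((sq2 + sq14)/2)⁻¹ := by
      have hm : (sq2 + sq14)/2 * (-((sq2 - sq14)/6)) = 1 := by
        linear_combination hs14/12 - hs2/12
      have := inv_eq_of_mul_eq_one_right hm
      linear_combination this
    have hδ : (-sq2 - sq14)/6 = -((-sq2 + sq14)/2)⁻¹ := by
      have hm : (-sq2 + sq14)/2 * (-((-sq2 - sq14)/6)) = 1 := by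
        linear_combination hs14/12 - hs2/12
      have := inv_eq_of_mul_eq_one_right hm
      linear_combination this
    rw [hγ, hδ, sub_neg_eq_add, sub_neg_eq_add, sub_neg_eq_add, sub_neg_eq_add]
    have P1 := pairT z ((sq2 + sq14)/2) hz ha1 (sub_ne_zero.mpr hA) (sub_ne_zero.mpr gA)
    have P2 := pairT z ((-sq2 + sq14)/2) hz ha2 (sub_ne_zero.mpr hB) (sub_ne_zero.mpr gB)
    linear_combination P1 + P2
  · -- Part 2: the U relation
    intro z H
    obtain ⟨Hd0, HA0⟩ := H 0 (by norm_num)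
    obtain ⟨Hd1, HA1⟩ := H 1 (by norm_num)
    obtain ⟨Hd2, HA2⟩ := H 2 (by norm_num)
    obtain ⟨Hd3, HA3⟩ := H 3 (by norm_num)
    rw [pow_one] at Hd1 HA1
    rw [mE0] at HA0
    rw [dE1] at Hd1
    rw [dE2] at Hd2
    rw [dE3] at Hd3
    rw [mE1] at HA1
    rw [mE2] at HA2
    rw [mE3] at HA3
    obtain ⟨nA1, nB1, nC1, nD1⟩ := HA1
    obtain ⟨nA2, nB2, nC2, nD2⟩ := HA2
    obtain ⟨nA3, nB3, nC3, nD3⟩ := HA3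
    obtain ⟨qA, qB, qC, qD⟩ := HA0
    -- e ≠ 0 facts
    have he11 : (1*sq2 + (-1)*sq14)/2 ≠ 0 := lin_ne' 1 (-1) 2 (by norm_num) (by norm_num)
    have he12 : (3*sq2 + (-1)*sq14)/2 ≠ 0 := lin_ne' 3 (-1) 2 (by norm_num) (by norm_num)
    have he13 : (5*sq2 + 1*sq14)/6 ≠ 0 := lin_ne' 5 1 6 (by norm_num) (by norm_num)
    have he14 : (7*sq2 + 1*sq14)/6 ≠ 0 := lin_ne' 7 1 6 (by norm_num) (by norm_num)
    have he21 : (0 + sq2*sq14)/(-2) ≠ 0 := st_ne 0 (-2) (by norm_num) (by norm_num)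
    have he22 : (-4 + sq2*sq14)/(-2) ≠ 0 := st_ne (-4) (-2) (by norm_num) (by norm_num)
    have he23 : (4 + sq2*sq14)/6 ≠ 0 := st_ne 4 6 (by norm_num) (by norm_num)
    have he24 : (8 + sq2*sq14)/6 ≠ 0 := st_ne 8 6 (by norm_num) (by norm_num)
    have he31 : ((-1)*sq2 + (-1)*sq14)/2 ≠ 0 := lin_ne' (-1) (-1) 2 (by norm_num) (by norm_num)
    have he33 : ((-1)*sq2 + 1*sq14)/6 ≠ 0 := lin_ne' (-1) 1 6 (by norm_num) (by norm_num)
    have he34 : (1*sq2 + 1*sq14)/6 ≠ 0 := lin_ne' 1 1 6 (by norm_num) (by norm_num)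
    -- slash_term instances, t = 1 : (a,b,c,d) = (sq2, -1, 1, 0)
    have hdet1 : sq2*0 - (-1)*1 = 1 := by ring
    have T11 := slash_term sq2 (-1) 1 0 ((sq2+sq14)/2) ((1*sq2 + (-1)*sq14)/2) ((-sq2-sq14)/6) z
      hdet1 he11 (by ring) (by linear_combination hs14/12 - hs2/12) Hd1 (sub_ne_zero.mpr nA1)
    have T12 := slash_term sq2 (-1) 1 0 ((-sq2+sq14)/2) ((3*sq2 + (-1)*sq14)/2) ((3*sq2+sq14)/2) z
      hdet1 he12 (by ring) (by linear_combination 9/4*hs2 - 1/4*hs14) Hd1 (sub_ne_zero.mpr nB1)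
    have T13 := slash_term sq2 (-1) 1 0 ((sq2-sq14)/6) ((5*sq2 + 1*sq14)/6) ((5*sq2-sq14)/6) z
      hdet1 he13 (by ring) (by linear_combination 25/36*hs2 - 1/36*hs14) Hd1 (sub_ne_zero.mpr nC1)
    have T14 := slash_term sq2 (-1) 1 0 ((-sq2-sq14)/6) ((7*sq2 + 1*sq14)/6) ((7*sq2-sq14)/14) z
      hdet1 he14 (by ring) (by linear_combination 49/84*hs2 - 1/84*hs14) Hd1 (sub_ne_zero.mpr nD1)
    -- t = 2 : (a,b,c,d) = (1, -sq2, sq2, -1)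
    have hdet2 : 1*(-1) - (-sq2)*sq2 = 1 := by linear_combination hs2
    have T21 := slash_term 1 (-sq2) sq2 (-1) ((sq2+sq14)/2) ((0 + sq2*sq14)/(-2)) ((7*sq2-sq14)/14) z
      hdet2 he21 (by linear_combination hs2/2) (by linear_combination (-sq14/4)*hs2 + (sq2/28)*hs14) Hd2 (sub_ne_zero.mpr nA2)
    have T22 := slash_term 1 (-sq2) sq2 (-1) ((-sq2+sq14)/2) ((-4 + sq2*sq14)/(-2)) ((sq2-sq14)/6) z
      hdet2 he22 (by linear_combination -hs2/2) (by linear_combination (-sq14/12)*hs2 + (sq2/12)*hs14) Hd2 (sub_ne_zero.mpr nB2)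
    have T23 := slash_term 1 (-sq2) sq2 (-1) ((sq2-sq14)/6) ((4 + sq2*sq14)/6) ((-sq2+sq14)/2) z
      hdet2 he23 (by linear_combination hs2/6) (by linear_combination (-sq14/12)*hs2 + (sq2/12)*hs14) Hd2 (sub_ne_zero.mpr nC2)
    have T24 := slash_term 1 (-sq2) sq2 (-1) ((-sq2-sq14)/6) ((8 + sq2*sq14)/6) ((7*sq2-sq14)/6) z
      hdet2 he24 (by linear_combination -hs2/6) (by linear_combination (7*sq14/36)*hs2 - (sq2/36)*hs14) Hd2 (sub_ne_zero.mpr nD2)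
    -- t = 3 : (a,b,c,d) = (0, -1, 1, -sq2)
    have hdet3 : (0:ℂ)*(-sq2) - (-1)*1 = 1 := by ring
    have T31 := slash_term 0 (-1) 1 (-sq2) ((sq2+sq14)/2) (((-1)*sq2 + (-1)*sq14)/2) ((7*sq2-sq14)/6) z
      hdet3 he31 (by ring) (by linear_combination -hs2/12 + hs14/12) Hd3 (sub_ne_zero.mpr nA3)
    have T32 := slash_term 0 (-1) 1 (-sq2) ((-sq2+sq14)/2) ((1*sq2 + (-1)*sq14)/2) ((5*sq2-sq14)/6) z
      hdet3 he11 (by ring) (by linear_combination -hs2/12 + hs14/12) Hd3 (sub_ne_zero.mpr nB3)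
    have T33 := slash_term 0 (-1) 1 (-sq2) ((sq2-sq14)/6) (((-1)*sq2 + 1*sq14)/6) ((3*sq2+sq14)/2) z
      hdet3 he33 (by ring) (by linear_combination -hs2/12 + hs14/12) Hd3 (sub_ne_zero.mpr nC3)
    have T34 := slash_term 0 (-1) 1 (-sq2) ((-sq2-sq14)/6) ((1*sq2 + 1*sq14)/6) ((sq2+sq14)/2) z
      hdet3 he34 (by ring) (by linear_combination -hs2/12 + hs14/12) Hd3 (sub_ne_zero.mpr nD3)
    -- assemble
    have hpow : ∀ x : ℂ, x ^ (-(2 * ((1:ℕ) : ℤ))) = x⁻¹ * x⁻¹ := by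
      intro x
      rw [show -(2 * ((1:ℕ) : ℤ)) = (-2 : ℤ) by norm_num, _root_.zpow_neg, zpow_two, mul_inv]
    rw [hq z, show slash 1 Umat q z = (denom Umat z) ^ (-(2 * ((1:ℕ):ℤ))) * q (mobius Umat z) from rfl,
        show slash 1 (Umat^2) q z = (denom (Umat^2) z) ^ (-(2 * ((1:ℕ):ℤ))) * q (mobius (Umat^2) z) from rfl,
        show slash 1 (Umat^3) q z = (denom (Umat^3) z) ^ (-(2 * ((1:ℕ):ℤ))) * q (mobius (Umat^3) z) from rfl,
        hq (mobius Umat z), hq (mobius (Umat^2) z), hq (mobius (Umat^3) z),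
        dE1, dE2, dE3, mE1, mE2, mE3, hpow, hpow, hpow]
    linear_combination T11 + T12 - T13 - T14 + T21 + T22 - T23 - T24 + T31 + T32 - T33 - T34
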